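/- Let 0 < α < 1 and let D₁ and D₂ be independent random variables, each distributed according to the Pareto distribution with scale parameter 1 and shape parameter α (so P(Dᵢ > x) = x^{−α} for x ≥ 1), which has infinite mean. Then for every t ∈ (0,1), F_{D₁+D₂}⁻¹(t) > F_{D₁}⁻¹(t) + F_{D₂}⁻¹(t); that is, the pooling effect is positive at every margin ratio, so the threshold of the pooling effect is 0. -/

import Mathlib

open MeasureTheory ProbabilityTheory Set Filter Topology

/-- The quantile function of a distribution on `ℝ`: `F⁻¹(t) = inf {x | t ≤ F(x)}`. -/
noncomputable def quantile (μ : Measure ℝ) (t : ℝ) : ℝ :=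
  sInf {x : ℝ | t ≤ cdf μ x}

private lemma key_ineq {β v : ℝ} (hβ : 1 < β) (hv0 : 0 < v) (hv1 : v < 1) :
    2 < (1 + v) ^ β + (1 + v) ^ β * (1 - v) ^ β := by
  have hw : 1 + β * v < (1 + v) ^ β :=
    one_add_mul_self_lt_rpow_one_add (by linarith) hv0.ne' hβ
  have hz : 1 + β * (-v) ≤ (1 + (-v)) ^ β :=
    one_add_mul_self_le_rpow_one_add (by linarith) hβ.le
  have hz' : 1 - β * v ≤ (1 - v) ^ β := by
    have : (1 : ℝ) + (-v) = 1 - v := by ring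
    rw [this] at hz; linarith
  have hz0 : (0:ℝ) < (1 - v) ^ β := Real.rpow_pos_of_pos (by linarith) β
  have hw0 : (0:ℝ) < (1 + v) ^ β := Real.rpow_pos_of_pos (by linarith) β
  have hβv : 0 < β * v := by positivity
  rcases le_or_gt 1 (β * v) with h | h
  · nlinarith [mul_pos hw0 hz0]
  · nlinarith [mul_lt_mul_of_pos_right hw hz0]

private lemma pareto_cdf {α : ℝ} (hα : 0 < α) {x : ℝ} (hx : 1 ≤ x) :
    cdf (paretoMeasure 1 α) x = 1 - x ^ (-α) := by
  rw [cdf_paretoMeasure_eq_integral one_pos hα]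
  have hdisj : Disjoint (Iio (1:ℝ)) (Icc 1 x) := by
    apply Set.disjoint_left.2
    intro y hy hy'
    exact absurd hy'.1 (not_le.2 hy)
  have hunion : Iio (1:ℝ) ∪ Icc 1 x = Iic x := by
    ext y
    simp only [mem_union, mem_Iio, mem_Icc, mem_Iic]
    constructor
    · rintro (h | ⟨h1, h2⟩)
      · linarith
      · exact h2
    · intro h
      rcases lt_or_ge y 1 with h1 | h1
      · exact Or.inl h1
      · exact Or.inr ⟨h1, h⟩
  have hzero : ∀ y ∈ Iio (1:ℝ), paretoPDFReal 1 α y = 0 := by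
    intro y hy
    rw [paretoPDFReal, if_neg (not_le.2 hy)]
  have hcont : ContinuousOn (fun y : ℝ => α * 1 ^ α * y ^ (-(α + 1))) (Icc 1 x) := by
    apply ContinuousOn.mul continuousOn_const
    apply ContinuousOn.rpow_const continuousOn_id
    intro y hy
    exact Or.inl (ne_of_gt (lt_of_lt_of_le one_pos hy.1))
  have heq : ∀ y ∈ Icc (1:ℝ) x, paretoPDFReal 1 α y = α * 1 ^ α * y ^ (-(α + 1)) := by
    intro y hy
    rw [paretoPDFReal, if_pos hy.1]
  have hint1 : IntegrableOn (paretoPDFReal 1 α) (Iio 1) := by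
    apply IntegrableOn.congr_fun (integrableOn_zero) _ measurableSet_Iio
    intro y hy
    exact (hzero y hy).symm
  have hint2 : IntegrableOn (paretoPDFReal 1 α) (Icc 1 x) := by
    apply IntegrableOn.congr_fun (hcont.integrableOn_compact isCompact_Icc) _ measurableSet_Icc
    intro y hy
    exact (heq y hy).symm
  rw [← hunion, setIntegral_union hdisj measurableSet_Icc hint1 hint2,
    setIntegral_congr_fun measurableSet_Iio hzero,
    setIntegral_congr_fun measurableSet_Icc heq]
  simp only [integral_zero, zero_add]
  rw [integral_Icc_eq_integral_Ioc, ← intervalIntegral.integral_of_le hx]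
  have h0 : (0:ℝ) ∉ Set.uIcc (1:ℝ) x := by
    rw [Set.mem_uIcc]
    push_neg
    refine ⟨fun h => absurd h (by norm_num), fun h => absurd h (by linarith)⟩
  rw [intervalIntegral.integral_const_mul,
    integral_rpow (Or.inr ⟨by intro h; nlinarith, h0⟩)]
  have hαne : -(α + 1) + 1 = -α := by ring
  rw [hαne, Real.one_rpow, Real.one_rpow]
  field_simp [hα.ne']
  ring

private lemma quantile_pareto {α t : ℝ} (hα : 0 < α) (ht0 : 0 < t) (ht1 : t < 1) :
    quantile (paretoMeasure 1 α) t = (1 - t) ^ (-α⁻¹) := by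
  set q := (1 - t) ^ (-α⁻¹) with hq
  have hu0 : 0 < 1 - t := by linarith
  have hq1 : 1 < q := by
    rw [hq, Real.one_lt_rpow_iff_of_pos hu0]
    exact Or.inr ⟨by linarith, neg_lt_zero.2 (by positivity)⟩
  have hqα : q ^ (-α) = 1 - t := by
    rw [hq, ← Real.rpow_mul hu0.le]
    have : -α⁻¹ * -α = 1 := by field_simp
    rw [this, Real.rpow_one]
  have hset : {x : ℝ | t ≤ cdf (paretoMeasure 1 α) x} = Ici q := by
    ext x
    simp only [mem_setOf_eq, mem_Ici]
    constructor
    · intro hx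
      by_contra hxq
      push_neg at hxq
      rcases lt_or_ge x 1 with h1 | h1
      · have hmono : cdf (paretoMeasure 1 α) x ≤ cdf (paretoMeasure 1 α) 1 :=
          monotone_cdf _ h1.le
        rw [pareto_cdf hα le_rfl, Real.one_rpow] at hmono
        linarith
      · rw [pareto_cdf hα h1] at hx
        have : q ^ (-α) < x ^ (-α) :=
          Real.rpow_lt_rpow_of_neg (by linarith) hxq (by linarith)
        rw [hqα] at this
        linarith
    · intro hx
      rw [pareto_cdf hα (by linarith)]
      have : x ^ (-α) ≤ q ^ (-α) :=
        Real.rpow_le_rpow_of_nonpos (by linarith) hx (by linarith)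
      rw [hqα] at this
      linarith
  rw [quantile, hset, csInf_Ici]

/-- For independent Pareto(1, α) demands with `0 < α < 1` (infinite mean), the pooling
effect is positive at every margin ratio, so the threshold is `0`. -/
theorem pooling_effect_pos_of_pareto {Ω : Type*} [MeasurableSpace Ω]
    (P : Measure Ω) [IsProbabilityMeasure P] (D₁ D₂ : Ω → ℝ)
    (hD₁ : Measurable D₁) (hD₂ : Measurable D₂)
    (α : ℝ) (hα0 : 0 < α) (hα1 : α < 1)
    (hind : IndepFun D₁ D₂ P)
    (h₁ : Measure.map D₁ P = paretoMeasure 1 α)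
    (h₂ : Measure.map D₂ P = paretoMeasure 1 α) :
    ¬ Integrable D₁ P ∧
      ∀ t ∈ Set.Ioo (0 : ℝ) 1,
        quantile (Measure.map D₁ P) t + quantile (Measure.map D₂ P) t <
          quantile (Measure.map (fun ω => D₁ ω + D₂ ω) P) t := by
  haveI hPμ : IsProbabilityMeasure (paretoMeasure 1 α) :=
    isProbabilityMeasure_paretoMeasure one_pos hα0
  constructor
  · -- Non-integrability
    intro hI
    have hI' : Integrable id (paretoMeasure 1 α) := by
      rw [← h₁]
      exact (integrable_map_measure aestronglyMeasurable_id hD₁.aemeasurable).2 hI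
    have hmeas_pdf : Measurable (paretoPDF 1 α) :=
      (measurable_paretoPDFReal 1 α).ennreal_ofReal
    rw [paretoMeasure, integrable_withDensity_iff hmeas_pdf
      (Filter.Eventually.of_forall fun x => ENNReal.ofReal_lt_top)] at hI'
    have hI2 : IntegrableOn (fun x => id x * (paretoPDF 1 α x).toReal) (Ioi 1) volume :=
      hI'.integrableOn
    have hI3 : IntegrableOn (fun x : ℝ => α * x ^ (-α)) (Ioi 1) volume := by
      apply IntegrableOn.congr_fun hI2 _ measurableSet_Ioi
      intro y hy
      have hy1 : (1:ℝ) < y := hy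
      have hy0 : (0:ℝ) < y := by linarith
      show id y * (paretoPDF 1 α y).toReal = α * y ^ (-α)
      rw [paretoPDF_of_le hy1.le, ENNReal.toReal_ofReal (by positivity)]
      rw [id_eq, Real.one_rpow, mul_one]
      have hrw : y * (α * y ^ (-(α + 1))) = α * (y ^ (-(α + 1)) * y) := by ring
      have h7 : -(α + 1) + 1 = -α := by ring
      rw [hrw, ← Real.rpow_add_one hy0.ne', h7]
    have hI4 : IntegrableOn (fun x : ℝ => x ^ (-α)) (Ioi 1) volume := by
      have h5 : IntegrableOn (fun x : ℝ => α⁻¹ * (α * x ^ (-α))) (Ioi 1) volume :=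
        hI3.const_mul α⁻¹
      apply IntegrableOn.congr_fun h5 _ measurableSet_Ioi
      intro y hy
      show α⁻¹ * (α * y ^ (-α)) = y ^ (-α)
      field_simp
    rw [integrableOn_Ioi_rpow_iff zero_lt_one] at hI4
    linarith
  · -- Quantile comparison
    intro t ht
    obtain ⟨ht0, ht1⟩ := ht
    set v := Real.sqrt t with hv
    have hv0 : 0 < v := Real.sqrt_pos.2 ht0
    have hv1 : v < 1 := by
      rw [hv, show (1:ℝ) = Real.sqrt 1 by simp]
      exact Real.sqrt_lt_sqrt ht0.le ht1
    have hvv : v * v = t := Real.mul_self_sqrt ht0.le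
    set β := α⁻¹ with hβdef
    have hβ : 1 < β := (one_lt_inv₀ hα0).2 hα1
    set q := (1 - t) ^ (-β) with hqdef
    set m := (1 - v) ^ (-β) with hmdef
    have hu0 : (0:ℝ) < 1 - t := by linarith
    have h1v0 : (0:ℝ) < 1 - v := by linarith
    have h1v0' : (0:ℝ) < 1 + v := by linarith
    -- key inequality : 2 * q < 1 + m
    have hw0 : (0:ℝ) < (1 + v) ^ β := Real.rpow_pos_of_pos h1v0' β
    have hz0 : (0:ℝ) < (1 - v) ^ β := Real.rpow_pos_of_pos h1v0 β
    have hqeq : q = ((1 + v) ^ β * (1 - v) ^ β)⁻¹ := by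
      rw [hqdef, ← Real.mul_rpow h1v0'.le h1v0.le,
        show (1 + v) * (1 - v) = 1 - t by nlinarith, Real.rpow_neg hu0.le]
    have hmeq : m = ((1 - v) ^ β)⁻¹ := by
      rw [hmdef, Real.rpow_neg h1v0.le]
    have h2q : 2 * q < 1 + m := by
      have hkey := key_ineq hβ hv0 hv1
      rw [hqeq, hmeq]
      have hprod : (0:ℝ) < ((1 + v) ^ β * (1 - v) ^ β)⁻¹ := by positivity
      have := mul_lt_mul_of_pos_right hkey hprod
      calc 2 * ((1 + v) ^ β * (1 - v) ^ β)⁻¹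
          < ((1 + v) ^ β + (1 + v) ^ β * (1 - v) ^ β) * ((1 + v) ^ β * (1 - v) ^ β)⁻¹ := this
        _ = 1 + ((1 - v) ^ β)⁻¹ := by field_simp; ring
    have hq1 : 1 < q := by
      rw [hqdef, Real.one_lt_rpow_iff_of_pos hu0]
      exact Or.inr ⟨by linarith, neg_lt_zero.2 (by positivity)⟩
    have hm1 : 1 < m := by
      rw [hmdef, Real.one_lt_rpow_iff_of_pos h1v0]
      exact Or.inr ⟨by linarith, neg_lt_zero.2 (by positivity)⟩
    set s := (2 * q + (1 + m)) / 2 with hsdef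
    have hs1 : 2 * q < s := by rw [hsdef]; linarith
    have hs2 : s < 1 + m := by rw [hsdef]; linarith
    have hs3 : (2:ℝ) < s := by linarith
    -- a.e. lower bounds
    have hae : ∀ (D : Ω → ℝ), Measurable D → Measure.map D P = paretoMeasure 1 α →
        ∀ᵐ ω ∂P, 1 ≤ D ω := by
      intro D hD hmap
      have h0 : P (D ⁻¹' Iio 1) = 0 := by
        rw [← Measure.map_apply hD measurableSet_Iio, hmap, paretoMeasure,
          withDensity_apply _ measurableSet_Iio, lintegral_paretoPDF_of_le le_rfl]
      rw [ae_iff]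
      have hset2 : {ω | ¬ 1 ≤ D ω} = D ⁻¹' Iio 1 := by
        ext ω
        simp [not_le]
      rw [hset2]
      exact h0
    have hae₁ := hae D₁ hD₁ h₁
    have hae₂ := hae D₂ hD₂ h₂
    -- the sum measure
    set ν := Measure.map (fun ω => D₁ ω + D₂ ω) P with hνdef
    haveI hνP : IsProbabilityMeasure ν :=
      Measure.isProbabilityMeasure_map ((hD₁.add hD₂).aemeasurable)
    -- bound on the cdf of the sum at s
    have hcdf_sum : cdf ν s < t := by
      have hmeas : P ((fun ω => D₁ ω + D₂ ω) ⁻¹' Iic s)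
          ≤ P (D₁ ⁻¹' Iic (s - 1) ∩ D₂ ⁻¹' Iic (s - 1)) := by
        apply measure_mono_ae
        filter_upwards [hae₁, hae₂] with ω h1 h2
        intro hω
        have hω' : D₁ ω + D₂ ω ≤ s := hω
        constructor
        · show D₁ ω ≤ s - 1
          linarith
        · show D₂ ω ≤ s - 1
          linarith
      have hprod : P (D₁ ⁻¹' Iic (s - 1) ∩ D₂ ⁻¹' Iic (s - 1))
          = P (D₁ ⁻¹' Iic (s - 1)) * P (D₂ ⁻¹' Iic (s - 1)) :=
        hind.measure_inter_preimage_eq_mul _ _ measurableSet_Iic measurableSet_Iic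
      set a := 1 - (s - 1) ^ (-α) with hadef
      have hs1' : (1:ℝ) ≤ s - 1 := by linarith
      have hPA : ∀ (D : Ω → ℝ), Measurable D → Measure.map D P = paretoMeasure 1 α →
          P (D ⁻¹' Iic (s - 1)) = ENNReal.ofReal a := by
        intro D hD hmap
        rw [← Measure.map_apply hD measurableSet_Iic, hmap,
          ← ofReal_cdf (paretoMeasure 1 α) (s - 1), pareto_cdf hα0 hs1']
      have ha0 : 0 ≤ a := by
        have : (s - 1) ^ (-α) ≤ 1 := by
          calc (s - 1) ^ (-α) ≤ (1:ℝ) ^ (-α) :=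
            Real.rpow_le_rpow_of_nonpos one_pos hs1' (by linarith)
          _ = 1 := Real.one_rpow _
        rw [hadef]; linarith
      have hav : a < v := by
        have hsm : s - 1 < m := by linarith
        have : m ^ (-α) < (s - 1) ^ (-α) :=
          Real.rpow_lt_rpow_of_neg (by linarith) hsm (by linarith)
        have hmα : m ^ (-α) = 1 - v := by
          rw [hmdef, ← Real.rpow_mul h1v0.le]
          have : -β * -α = 1 := by rw [hβdef]; field_simp
          rw [this, Real.rpow_one]
        rw [hmα] at this
        rw [hadef]; linarith
      have hcdfν : cdf ν s = (P ((fun ω => D₁ ω + D₂ ω) ⁻¹' Iic s)).toReal := by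
        rw [cdf_eq_real, measureReal_def, hνdef, Measure.map_apply (f := fun ω => D₁ ω + D₂ ω) (hD₁.add hD₂) measurableSet_Iic]
      rw [hcdfν]
      calc (P ((fun ω => D₁ ω + D₂ ω) ⁻¹' Iic s)).toReal
          ≤ (P (D₁ ⁻¹' Iic (s - 1) ∩ D₂ ⁻¹' Iic (s - 1))).toReal :=
            ENNReal.toReal_mono (measure_ne_top P _) hmeas
        _ = a * a := by
            rw [hprod, hPA D₁ hD₁ h₁, hPA D₂ hD₂ h₂, ← ENNReal.ofReal_mul ha0,
              ENNReal.toReal_ofReal (by positivity)]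
        _ < v * v := mul_self_lt_mul_self ha0 hav
        _ = t := hvv
    -- conclude
    rw [h₁, h₂, quantile_pareto hα0 ht0 ht1]
    have hsle : s ≤ quantile ν t := by
      apply le_csInf
      · obtain ⟨x, hx⟩ := (Filter.Tendsto.eventually_const_le ht1 (tendsto_cdf_atTop ν)).exists
        exact ⟨x, hx⟩
      · intro b hb
        by_contra hbs
        push_neg at hbs
        have : cdf ν b ≤ cdf ν s := monotone_cdf _ hbs.le
        have hb' : t ≤ cdf ν b := hb
        linarith
    have hqq : (1 - t) ^ (-α⁻¹) = q := by rw [hqdef, hβdef]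
    rw [hqq]
    linarith
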